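/- arXiv:1210.7648 — 2 statements merged into one kernel-verified Lean document; each statement's English description precedes it below -/
import Mathlib

section
/- Let α ∈ ℝ with 0 < |α| < 1/2, and let r, r', t > 0. Then lim_{t → ∞} t^{|α|} · ∑_{m ∈ ℤ, m ≠ 0} I_{|m+α|}( r r' / (2 i t) ) e^{i m (θ − θ')} = 0, for any fixed r, r' > 0 and angles θ, θ'. -/
open Real Filter

/-- The modified Bessel function of the first kind, defined by its power series. -/
noncomputable def besselI (ν : ℝ) (z : ℂ) : ℂ :=
  ∑' k : ℕ, (z / 2) ^ ((ν : ℂ) + 2 * k) /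
    ((k.factorial : ℂ) * (Real.Gamma (ν + k + 1) : ℂ))


lemma gamma_ge_half {s : ℝ} (hs : 3/2 ≤ s) : 1/2 ≤ Real.Gamma s := by
  have hmono := Real.Gamma_strictMonoOn_Ici.monotoneOn
  rcases le_or_gt 2 s with h | h
  · have : Real.Gamma 2 ≤ Real.Gamma s :=
      hmono (by norm_num) (Set.mem_Ici.2 h) h
    rw [Real.Gamma_two] at this; linarith
  · have hs0 : s ≠ 0 := by positivity
    have h1 : Real.Gamma 2 ≤ Real.Gamma (s + 1) :=
      hmono (by norm_num) (by simp [Set.mem_Ici]; linarith) (by linarith)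
    rw [Real.Gamma_two] at h1
    have h2 : Real.Gamma (s + 1) = s * Real.Gamma s := Real.Gamma_add_one hs0
    nlinarith [Real.Gamma_pos_of_pos (show (0:ℝ) < s by linarith)]

lemma gamma_step {ν : ℝ} (hν : 1/2 ≤ ν) (k : ℕ) :
    Real.Gamma (ν + 1) ≤ Real.Gamma (ν + k + 1) := by
  induction k with
  | zero => simp
  | succ n ih =>
    have h1 : ν + (n+1:ℕ) + 1 = (ν + n + 1) + 1 := by push_cast; ring
    have h2 : Real.Gamma (ν + n + 1 + 1) = (ν + n + 1) * Real.Gamma (ν + n + 1) :=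
      Real.Gamma_add_one (by positivity)
    have hp := Real.Gamma_pos_of_pos (show (0:ℝ) < ν + n + 1 by positivity)
    rw [h1, h2]
    nlinarith

lemma hasSum_exp_real (x : ℝ) : HasSum (fun k : ℕ => x ^ k / k.factorial) (Real.exp x) := by
  have h := (Real.summable_pow_div_factorial x).hasSum
  rwa [show ∑' n : ℕ, x ^ n / n.factorial = Real.exp x by
    rw [Real.exp_eq_exp_ℝ, NormedSpace.exp_eq_tsum_div]] at h


lemma besselI_bound {ν : ℝ} (hν : 1/2 ≤ ν) (z : ℂ) :
    ‖besselI ν z‖ ≤ ‖z/2‖ ^ ν / Real.Gamma (ν + 1) *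
      Real.exp (‖z/2‖ ^ (2:ℕ)) := by
  set w := ‖z/2‖ with hwdef
  have hw : 0 ≤ w := norm_nonneg _
  have hG1 : 0 < Real.Gamma (ν + 1) := Real.Gamma_pos_of_pos (by linarith)
  have hH : HasSum (fun k : ℕ => w ^ ν / Real.Gamma (ν + 1) * ((w ^ 2) ^ k / k.factorial))
      (w ^ ν / Real.Gamma (ν + 1) * Real.exp (w ^ 2)) := (hasSum_exp_real _).mul_left _
  refine tsum_of_norm_bounded hH fun k => ?_
  have hGk : 0 < Real.Gamma (ν + k + 1) := Real.Gamma_pos_of_pos (by positivity)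
  have hkf : (0:ℝ) < k.factorial := by positivity
  have hnum : ‖(z / 2) ^ ((ν:ℂ) + 2 * k)‖ ≤ w ^ (ν + 2 * k) := by
    have h := Complex.norm_cpow_le (z / 2) ((ν:ℂ) + 2 * k)
    have hw2 : w = ‖z‖ / 2 := by simp [hwdef]
    rw [hw2]
    simpa using h
  have hA : w ^ (ν + 2 * (k:ℝ)) ≤ w ^ ν * (w ^ 2) ^ k := by
    rcases eq_or_lt_of_le hw with h0 | h0
    · rw [← h0, Real.zero_rpow (by positivity), Real.zero_rpow (by linarith)]
      simp
    · rw [Real.rpow_add h0, Real.rpow_mul hw, Real.rpow_two, Real.rpow_natCast]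
  have hden : ‖((k.factorial : ℂ) * (Real.Gamma (ν + k + 1) : ℂ))‖
      = (k.factorial : ℝ) * Real.Gamma (ν + k + 1) := by
    rw [norm_mul, Complex.norm_natCast, Complex.norm_real, Real.norm_of_nonneg hGk.le]
  rw [norm_div, hden]
  calc ‖(z / 2) ^ ((ν:ℂ) + 2 * (k:ℕ))‖ / ((k.factorial : ℝ) * Real.Gamma (ν + k + 1))
      ≤ (w ^ ν * (w ^ 2) ^ k) / ((k.factorial : ℝ) * Real.Gamma (ν + 1)) := by
        apply div_le_div₀ (by positivity) (hnum.trans (by exact_mod_cast hA)) (by positivity)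
        exact mul_le_mul_of_nonneg_left (gamma_step hν k) hkf.le
    _ = w ^ ν / Real.Gamma (ν + 1) * ((w ^ 2) ^ k / k.factorial) := by ring

lemma nu_lb {α : ℝ} (hα' : |α| < 1/2) {m : ℤ} (hm : m ≠ 0) :
    (1 - |α|) + ((m.natAbs : ℝ) - 1) ≤ |(m : ℝ) + α| := by
  have h1 : |(m:ℝ)| = (m.natAbs : ℝ) := by
    rw [← Int.cast_abs, Int.abs_eq_natAbs, Int.cast_natCast]
  have h2 : |(m:ℝ)| - |α| ≤ |(m:ℝ) + α| := by
    have := abs_sub_abs_le_abs_sub (m:ℝ) (-α)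
    simpa [sub_neg_eq_add] using this
  rw [h1] at h2; linarith

lemma nu_half {α : ℝ} (hα' : |α| < 1/2) {m : ℤ} (hm : m ≠ 0) :
    1/2 ≤ |(m : ℝ) + α| := by
  have h := nu_lb hα' hm
  have : 1 ≤ m.natAbs := Int.natAbs_pos.mpr hm
  have : (1:ℝ) ≤ (m.natAbs : ℝ) := by exact_mod_cast this
  linarith

theorem stmt_8 (α : ℝ) (hα : 0 < |α|) (hα' : |α| < 1/2)
    (r r' θ θ' : ℝ) (hr : 0 < r) (hr' : 0 < r') :
    Tendsto (fun t : ℝ =>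
        ((t ^ |α| : ℝ) : ℂ) *
          ∑' m : {m : ℤ // m ≠ 0},
            besselI |((m : ℤ) : ℝ) + α| ((r * r' : ℂ) / (2 * Complex.I * (t : ℂ))) *
              Complex.exp (Complex.I * ((m : ℤ) : ℂ) * ((θ : ℂ) - (θ' : ℂ))))
      atTop (nhds 0) := by
  set β := |α| with hβdef
  have hsumZ : Summable (fun m : ℤ => ((1:ℝ)/2) ^ m.natAbs) := by
    apply Summable.of_nat_of_neg
    · simpa using summable_geometric_two
    · simpa using summable_geometric_two
  have hS : Summable (fun m : {m : ℤ // m ≠ 0} => (12:ℝ) * ((1:ℝ)/2) ^ (m : ℤ).natAbs) :=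
    (hsumZ.subtype _).mul_left 12
  set S := ∑' m : {m : ℤ // m ≠ 0}, (12:ℝ) * ((1:ℝ)/2) ^ (m : ℤ).natAbs with hSdef
  have hS0 : 0 ≤ S := tsum_nonneg fun m => by positivity
  apply squeeze_zero_norm'
    (a := fun t : ℝ => (r * r' / 4) ^ (1 - β) * S * t ^ (2 * β - 1))
  · filter_upwards [eventually_ge_atTop (max 1 (r * r'))] with t ht
    have ht1 : (1:ℝ) ≤ t := le_trans (le_max_left _ _) ht
    have ht0 : (0:ℝ) < t := lt_of_lt_of_le one_pos ht1
    have htrr : r * r' ≤ t := le_trans (le_max_right _ _) ht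
    set w := r * r' / (4 * t) with hwdef
    have hw0 : 0 < w := by positivity
    have hw2 : w ≤ 1/2 := by rw [hwdef, div_le_iff₀ (by positivity)]; nlinarith
    have hw1 : w ≤ 1 := by linarith
    have habs : ‖(r * r' : ℂ) / (2 * Complex.I * (t : ℂ)) / 2‖ = w := by
      rw [hwdef]
      rw [norm_div, norm_div, norm_mul, norm_mul]
      simp [Complex.norm_I, Complex.norm_real, abs_of_pos hr, abs_of_pos hr',
        abs_of_pos ht0]
      ring
    have hterm : ∀ m : {m : ℤ // m ≠ 0},
        ‖besselI |((m : ℤ) : ℝ) + α| ((r * r' : ℂ) / (2 * Complex.I * (t : ℂ))) *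
          Complex.exp (Complex.I * ((m : ℤ) : ℂ) * ((θ : ℂ) - (θ' : ℂ)))‖
        ≤ w ^ (1 - β) * ((12:ℝ) * ((1:ℝ)/2) ^ (m : ℤ).natAbs) := by
      intro m
      have hm : (m : ℤ) ≠ 0 := m.2
      have hν : 1/2 ≤ |((m : ℤ) : ℝ) + α| := nu_half hα' hm
      have hνlb := nu_lb hα' hm
      have hn1 : (1:ℝ) ≤ ((m : ℤ).natAbs : ℝ) := by
        exact_mod_cast Int.natAbs_pos.mpr hm
      rw [norm_mul]
      have hexp : ‖Complex.exp (Complex.I * ((m : ℤ) : ℂ) * ((θ : ℂ) - (θ' : ℂ)))‖ = 1 := by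
        rw [Complex.norm_exp]
        norm_num [Complex.mul_re]
      rw [hexp, mul_one]
      have hb := besselI_bound hν ((r * r' : ℂ) / (2 * Complex.I * (t : ℂ)))
      rw [habs] at hb
      have hgam : (1:ℝ)/2 ≤ Real.Gamma (|((m : ℤ) : ℝ) + α| + 1) :=
        gamma_ge_half (by linarith)
      have hgam0 : (0:ℝ) < Real.Gamma (|((m : ℤ) : ℝ) + α| + 1) :=
        Real.Gamma_pos_of_pos (by linarith)
      have hexp3 : Real.exp (w ^ (2:ℕ)) ≤ 3 := by
        have h1 : w ^ (2:ℕ) ≤ 1 := by nlinarith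
        calc Real.exp (w ^ (2:ℕ)) ≤ Real.exp 1 := Real.exp_le_exp.mpr h1
          _ ≤ 3 := by linarith [Real.exp_one_lt_d9.le]
      have hwnn : (0:ℝ) ≤ w ^ |((m : ℤ) : ℝ) + α| := Real.rpow_nonneg hw0.le _
      have hdiv : w ^ |((m : ℤ) : ℝ) + α| / Real.Gamma (|((m : ℤ) : ℝ) + α| + 1)
          ≤ w ^ |((m : ℤ) : ℝ) + α| * 2 := by
        rw [div_le_iff₀ hgam0]; nlinarith
      have hwp : w ^ |((m : ℤ) : ℝ) + α|
          ≤ w ^ (1 - β) * (2 * ((1:ℝ)/2) ^ (m : ℤ).natAbs) := by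
        calc w ^ |((m : ℤ) : ℝ) + α|
            ≤ w ^ ((1 - β) + (((m : ℤ).natAbs : ℝ) - 1)) :=
              Real.rpow_le_rpow_of_exponent_ge hw0 hw1 hνlb
          _ = w ^ (1 - β) * w ^ (((m : ℤ).natAbs : ℝ) - 1) := Real.rpow_add hw0 _ _
          _ ≤ w ^ (1 - β) * ((1/2:ℝ)) ^ (((m : ℤ).natAbs : ℝ) - 1) := by
              refine mul_le_mul_of_nonneg_left ?_ (Real.rpow_nonneg hw0.le _)
              exact Real.rpow_le_rpow hw0.le hw2 (by linarith)
          _ = w ^ (1 - β) * (2 * ((1:ℝ)/2) ^ (m : ℤ).natAbs) := by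
              rw [Real.rpow_sub (show (0:ℝ) < 1/2 by norm_num) (((m : ℤ).natAbs : ℝ)) 1,
                Real.rpow_one, Real.rpow_natCast]
              ring
      calc ‖besselI |((m : ℤ) : ℝ) + α| ((r * r' : ℂ) / (2 * Complex.I * (t : ℂ)))‖
          ≤ w ^ |((m : ℤ) : ℝ) + α| / Real.Gamma (|((m : ℤ) : ℝ) + α| + 1) *
            Real.exp (w ^ (2:ℕ)) := hb
        _ ≤ (w ^ |((m : ℤ) : ℝ) + α| * 2) * 3 :=
            mul_le_mul hdiv hexp3 (Real.exp_pos _).le (by nlinarith)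
        _ = w ^ |((m : ℤ) : ℝ) + α| * 6 := by ring
        _ ≤ (w ^ (1 - β) * (2 * ((1:ℝ)/2) ^ (m : ℤ).natAbs)) * 6 := by
            have := hwp; nlinarith
        _ = w ^ (1 - β) * ((12:ℝ) * ((1:ℝ)/2) ^ (m : ℤ).natAbs) := by ring
    have hHS : HasSum (fun m : {m : ℤ // m ≠ 0} =>
        w ^ (1 - β) * ((12:ℝ) * ((1:ℝ)/2) ^ (m : ℤ).natAbs)) (w ^ (1 - β) * S) :=
      hS.hasSum.mul_left _
    have hsum := tsum_of_norm_bounded hHS hterm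
    rw [norm_mul, Complex.norm_real, Real.norm_of_nonneg (Real.rpow_nonneg ht0.le _)]
    have hA : w ^ (1 - β) = (r * r' / 4) ^ (1 - β) * (t ^ (1 - β))⁻¹ := by
      rw [hwdef, show r * r' / (4 * t) = (r * r' / 4) / t from by ring,
        Real.div_rpow (by positivity) ht0.le, div_eq_mul_inv]
    have hT : t ^ β * (t ^ (1 - β))⁻¹ = t ^ (2 * β - 1) := by
      rw [← Real.rpow_neg ht0.le, ← Real.rpow_add ht0]
      norm_num
      ring_nf
    calc t ^ β * ‖∑' m : {m : ℤ // m ≠ 0},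
            besselI |((m : ℤ) : ℝ) + α| ((r * r' : ℂ) / (2 * Complex.I * (t : ℂ))) *
              Complex.exp (Complex.I * ((m : ℤ) : ℂ) * ((θ : ℂ) - (θ' : ℂ)))‖
        ≤ t ^ β * (w ^ (1 - β) * S) :=
          mul_le_mul_of_nonneg_left hsum (Real.rpow_nonneg ht0.le _)
      _ = (r * r' / 4) ^ (1 - β) * S * (t ^ β * (t ^ (1 - β))⁻¹) := by rw [hA]; ring
      _ = (r * r' / 4) ^ (1 - β) * S * t ^ (2 * β - 1) := by rw [hT]
  · have h := (tendsto_rpow_neg_atTop (show (0:ℝ) < 1 - 2 * β by linarith)).const_mul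
      ((r * r' / 4) ^ (1 - β) * S)
    simpa [show -(1 - 2 * β) = 2 * β - 1 from by ring] using h
end

section
/- Let 0 < |α| ≤ 1/2 and fix x, y ∈ ℝ² \ {0} with |x| = r, |y| = r'. There exist constants C₁, C₂ > 0 (depending only on α) such that for all t > 0 with r r' ≤ t: | (1/(4π t)) ∑_{m∈ℤ} I_{|m+α|}(r r'/(2it)) e^{im(θ−θ')} | ≤ C₂ · t^{−1} · (r r'/t)^{|α|}. -/
open Real MeasureTheory Set

lemma my_gamma_lb {s : ℝ} (hs : 1 ≤ s) : Real.exp (-2) ≤ Real.Gamma s := by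
  have hs0 : (0:ℝ) < s := lt_of_lt_of_le one_pos hs
  rw [Real.Gamma_eq_integral hs0]
  have hint : IntegrableOn (fun x : ℝ => Real.exp (-x) * x ^ (s - 1)) (Ioi 0) :=
    Real.GammaIntegral_convergent hs0
  have hsub : Ioc (1:ℝ) 2 ⊆ Ioi 0 := fun x hx => lt_trans one_pos hx.1
  have h1 : (Real.exp (-2) : ℝ) = ∫ x in Ioc (1:ℝ) 2, Real.exp (-2) := by
    rw [setIntegral_const]
    norm_num [Real.volume_Ioc]
  rw [h1]
  have h2 : ∫ x in Ioc (1:ℝ) 2, Real.exp (-2) ≤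
      ∫ x in Ioc (1:ℝ) 2, Real.exp (-x) * x ^ (s - 1) := by
    refine setIntegral_mono_on (integrableOn_const (by simp [Real.volume_Ioc]))
      (hint.mono_set hsub) measurableSet_Ioc ?_
    intro x hx
    have hx1 : (1:ℝ) ≤ x := hx.1.le
    have hx2 : x ≤ 2 := hx.2
    have h3 : (1:ℝ) ≤ x ^ (s - 1) := Real.one_le_rpow hx1 (by linarith)
    have h4 : Real.exp (-2) ≤ Real.exp (-x) := Real.exp_le_exp.2 (by linarith)
    calc Real.exp (-2) = Real.exp (-2) * 1 := (mul_one _).symm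
      _ ≤ Real.exp (-x) * x ^ (s - 1) := by
          apply mul_le_mul h4 h3 one_pos.le (Real.exp_pos _).le
  refine h2.trans ?_
  apply setIntegral_mono_set hint
  · filter_upwards [ae_restrict_mem measurableSet_Ioi] with x hx
    exact mul_nonneg (Real.exp_pos _).le (Real.rpow_nonneg (le_of_lt hx) _)
  · exact HasSubset.Subset.eventuallyLE hsub

lemma my_bessel_bound (ν : ℝ) (hν : 0 ≤ ν) (z : ℂ) (hz : z ≠ 0)
    (hq : ‖z‖ ≤ 1/2) :
    ‖besselI ν z‖ ≤ (Real.exp 2 * (16/15)) * (‖z‖ / 2) ^ ν := by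
  set q : ℝ := ‖z‖ / 2 with hqdef
  have hq0 : 0 < q := by
    have := norm_pos_iff.mpr hz
    positivity
  have hq4 : q ≤ 1/4 := by rw [hqdef]; linarith
  have key : ∀ k : ℕ,
      ‖(z / 2) ^ ((ν : ℂ) + 2 * k) / ((k.factorial : ℂ) * (Real.Gamma (ν + k + 1) : ℂ))‖
        ≤ (Real.exp 2 * q ^ ν) * (1/16 : ℝ) ^ k := by
    intro k
    have hz2 : z / 2 ≠ 0 := by simpa using hz
    have habs : ‖z / 2‖ = q := by
      rw [hqdef]; simp [norm_div]
    have hre : ((ν : ℂ) + 2 * k).re = ν + 2 * k := by simp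
    have him : ((ν : ℂ) + 2 * k).im = 0 := by simp
    have hnum : ‖(z / 2) ^ ((ν : ℂ) + 2 * k)‖ = q ^ (ν + 2 * (k:ℝ)) := by
      rw [Complex.norm_cpow_of_ne_zero hz2, hre, him, habs]
      simp
    have hGpos : 0 < Real.Gamma (ν + k + 1) := Real.Gamma_pos_of_pos (by positivity)
    have hden : ‖(k.factorial : ℂ) * (Real.Gamma (ν + k + 1) : ℂ)‖
        = (k.factorial : ℝ) * Real.Gamma (ν + k + 1) := by
      rw [norm_mul]
      rw [Complex.norm_natCast, Complex.norm_real, Real.norm_eq_abs, abs_of_pos hGpos]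
    have hfac : (1:ℝ) ≤ (k.factorial : ℝ) := by exact_mod_cast k.factorial_pos
    have hdlb : Real.exp (-2) ≤ (k.factorial : ℝ) * Real.Gamma (ν + k + 1) := by
      have h1 : Real.exp (-2) ≤ Real.Gamma (ν + k + 1) := my_gamma_lb (by have := Nat.cast_nonneg (α := ℝ) k; linarith)
      nlinarith [hGpos]
    have hsplit : q ^ (ν + 2 * (k:ℝ)) = q ^ ν * (q ^ 2) ^ k := by
      rw [Real.rpow_add hq0]
      congr 1
      rw [show (2 * (k:ℝ)) = ((2 * k : ℕ) : ℝ) by push_cast; ring, Real.rpow_natCast,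
        pow_mul]
    have hgeo : (q ^ 2) ^ k ≤ (1/16 : ℝ) ^ k := by
      apply pow_le_pow_left₀ (sq_nonneg q)
      nlinarith
    rw [norm_div, hnum, hden]
    rw [div_le_iff₀ (by positivity)]
    have e1 : q ^ (ν + 2 * (k:ℝ)) ≤ q ^ ν * (1/16:ℝ) ^ k := by
      rw [hsplit]
      have : 0 ≤ q ^ ν := Real.rpow_nonneg hq0.le ν
      nlinarith [Real.rpow_nonneg hq0.le ν]
    calc q ^ (ν + 2 * (k:ℝ)) ≤ q ^ ν * (1/16:ℝ) ^ k := e1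
      _ = (Real.exp 2 * q ^ ν * (1/16:ℝ) ^ k) * Real.exp (-2) := by
          rw [show Real.exp 2 * q ^ ν * (1/16:ℝ) ^ k * Real.exp (-2)
            = (Real.exp 2 * Real.exp (-2)) * (q ^ ν * (1/16:ℝ) ^ k) by ring, ← Real.exp_add]
          norm_num
      _ ≤ (Real.exp 2 * q ^ ν * (1/16:ℝ) ^ k) * ((k.factorial : ℝ) * Real.Gamma (ν + k + 1)) := by
          apply mul_le_mul_of_nonneg_left hdlb
          positivity
      _ = Real.exp 2 * q ^ ν * (1/16:ℝ) ^ k * ((k.factorial:ℝ) * Real.Gamma (ν + k + 1)) := by ring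
  have hgsum : HasSum (fun k : ℕ => (Real.exp 2 * q ^ ν) * (1/16 : ℝ) ^ k)
      ((Real.exp 2 * q ^ ν) * (1 - 1/16)⁻¹) :=
    (hasSum_geometric_of_lt_one (by norm_num) (by norm_num)).mul_left _
  have := tsum_of_norm_bounded hgsum key
  refine le_trans this (le_of_eq ?_)
  norm_num
  ring

theorem stmt_14 (α : ℝ) (hα : 0 < |α|) (hα' : |α| ≤ 1/2) :
    ∃ C₁ C₂ : ℝ, 0 < C₁ ∧ 0 < C₂ ∧
      ∀ r r' θ θ' t : ℝ, 0 < r → 0 < r' → 0 < t → r * r' ≤ t →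
        ‖((1 / (4 * (π : ℂ) * (t : ℂ))) *
            ∑' m : ℤ,
              besselI |(m : ℝ) + α| ((r * r' : ℂ) / (2 * Complex.I * (t : ℂ))) *
                Complex.exp (Complex.I * (m : ℂ) * ((θ : ℂ) - (θ' : ℂ))))‖ ≤
          C₂ * t⁻¹ * (r * r' / t) ^ |α| := by
  set B : ℝ := Real.exp 2 * (16/15) with hBdef
  have hB : 0 < B := by positivity
  have hS : Summable (fun m : ℤ => ((1/4 : ℝ)) ^ m.natAbs) := by
    apply Summable.of_nat_of_neg_add_one
    · simpa using summable_geometric_of_lt_one (r := (1/4:ℝ)) (by norm_num) (by norm_num)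
    · have : (fun n : ℕ => ((1/4:ℝ)) ^ ((-((n:ℤ) + 1)).natAbs))
          = fun n : ℕ => (1/4:ℝ) * (1/4:ℝ) ^ n := by
        funext n
        have : (-((n:ℤ) + 1)).natAbs = n + 1 := by
          omega
        rw [this, pow_succ]
        ring
      rw [this]
      exact (summable_geometric_of_lt_one (r := (1/4:ℝ)) (by norm_num) (by norm_num)).mul_left _
  set S : ℝ := ∑' m : ℤ, ((1/4 : ℝ)) ^ m.natAbs with hSdef
  have hSpos : 0 < S := by
    refine Summable.tsum_pos hS (fun i => by positivity) 0 (by norm_num)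
  refine ⟨1, B * S * 4 / (4 * π), one_pos, by positivity, ?_⟩
  intro r r' θ θ' t hr hr' ht hrt
  set z : ℂ := (r * r' : ℂ) / (2 * Complex.I * (t : ℂ)) with hzdef
  have habs_z : ‖z‖ = r * r' / (2 * t) := by
    rw [hzdef]
    rw [norm_div, norm_mul, norm_mul]
    simp [Complex.norm_real, abs_of_pos, hr, hr', ht, abs_of_pos ht,
      abs_of_pos hr, abs_of_pos hr', abs_of_pos (mul_pos hr hr')]
  have hz0 : z ≠ 0 := by
    rw [hzdef]
    apply div_ne_zero
    · exact mul_ne_zero (Complex.ofReal_ne_zero.2 hr.ne') (Complex.ofReal_ne_zero.2 hr'.ne')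
    · simp [Complex.ext_iff, ht.ne']
  have habs_le : ‖z‖ ≤ 1/2 := by
    rw [habs_z, div_le_iff₀ (by positivity)]
    linarith
  set q : ℝ := ‖z‖ / 2 with hqdef
  have hq_eq : q = r * r' / (4 * t) := by rw [hqdef, habs_z]; ring
  have hq0 : 0 < q := by rw [hq_eq]; positivity
  have hq4 : q ≤ 1/4 := by
    rw [hq_eq, div_le_iff₀ (by positivity)]
    linarith
  -- per-term bound
  have key : ∀ m : ℤ,
      ‖besselI |(m : ℝ) + α| z * Complex.exp (Complex.I * (m : ℂ) * ((θ : ℂ) - (θ' : ℂ)))‖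
        ≤ (B * (4 * q ^ |α|)) * ((1/4 : ℝ)) ^ m.natAbs := by
    intro m
    have hν0 : (0:ℝ) ≤ |(m : ℝ) + α| := abs_nonneg _
    have habs_exp : ‖Complex.exp (Complex.I * (m : ℂ) * ((θ : ℂ) - (θ' : ℂ)))‖ = 1 := by
      rw [Complex.norm_exp]
      have : (Complex.I * (m : ℂ) * ((θ : ℂ) - (θ' : ℂ))).re = 0 := by
        simp [Complex.mul_re, Complex.mul_im]
      rw [this, Real.exp_zero]
    rw [norm_mul, habs_exp, mul_one]
    have h1 : ‖besselI |(m : ℝ) + α| z‖ ≤ B * q ^ |(m : ℝ) + α| :=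
      my_bessel_bound _ hν0 z hz0 habs_le
    refine h1.trans ?_
    -- exponent facts
    have hmabs : ((m.natAbs : ℝ)) = |(m : ℝ)| := by
      rw [Nat.cast_natAbs]
      push_cast
      rfl
    have hlow : |α| ≤ |(m : ℝ) + α| ∧ ((m.natAbs : ℝ)) - 1 ≤ |(m : ℝ) + α| - |α| := by
      rcases eq_or_ne m 0 with rfl | hm
      · constructor <;> simp [hmabs] <;> linarith
      · have h2 : (1:ℝ) ≤ |(m:ℝ)| := by
          have : (1:ℤ) ≤ |m| := Int.one_le_abs hm
          calc (1:ℝ) ≤ ((|m| : ℤ) : ℝ) := by exact_mod_cast this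
            _ = |(m:ℝ)| := by push_cast; rfl
        have h3 : |(m:ℝ)| ≤ |(m:ℝ) + α| + |α| := by
          calc |(m:ℝ)| = |((m:ℝ) + α) + (-α)| := by ring_nf
            _ ≤ |(m:ℝ) + α| + |(-α)| := abs_add_le _ _
            _ = |(m:ℝ) + α| + |α| := by rw [abs_neg]
        constructor
        · linarith
        · rw [hmabs]; linarith
    have hrpow : q ^ |(m : ℝ) + α| ≤ q ^ |α| * (4 * ((1/4 : ℝ)) ^ m.natAbs) := by
      have e0 : (0:ℝ) ≤ |(m : ℝ) + α| - |α| := by linarith [hlow.1]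
      have expand : q ^ |(m : ℝ) + α| = q ^ |α| * q ^ (|(m : ℝ) + α| - |α|) := by
        rw [← Real.rpow_add hq0]
        congr 1
        ring
      rw [expand]
      have s1 : q ^ (|(m : ℝ) + α| - |α|) ≤ (1/4 : ℝ) ^ (|(m : ℝ) + α| - |α|) :=
        Real.rpow_le_rpow hq0.le hq4 e0
      have s2 : (1/4 : ℝ) ^ (|(m : ℝ) + α| - |α|) ≤ (1/4 : ℝ) ^ (((m.natAbs : ℝ)) - 1) :=
        Real.rpow_le_rpow_of_exponent_ge (by norm_num) (by norm_num) hlow.2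
      have s3 : (1/4 : ℝ) ^ (((m.natAbs : ℝ)) - 1) = 4 * ((1/4 : ℝ)) ^ m.natAbs := by
        rw [Real.rpow_sub (by norm_num), Real.rpow_one, Real.rpow_natCast]
        ring
      have := s1.trans (s2.trans_eq s3)
      have hqa : (0:ℝ) ≤ q ^ |α| := Real.rpow_nonneg hq0.le _
      nlinarith
    calc B * q ^ |(m : ℝ) + α| ≤ B * (q ^ |α| * (4 * ((1/4 : ℝ)) ^ m.natAbs)) := by
          exact mul_le_mul_of_nonneg_left hrpow hB.le
      _ = (B * (4 * q ^ |α|)) * ((1/4 : ℝ)) ^ m.natAbs := by ring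
  have hgsum : HasSum (fun m : ℤ => (B * (4 * q ^ |α|)) * ((1/4 : ℝ)) ^ m.natAbs)
      ((B * (4 * q ^ |α|)) * S) := hS.hasSum.mul_left _
  have hsum_bound := tsum_of_norm_bounded hgsum key
  rw [norm_mul]
  have habs_c : ‖1 / (4 * (π : ℂ) * (t : ℂ))‖ = 1 / (4 * π * t) := by
    rw [norm_div, norm_one, norm_mul, norm_mul]
    simp [Complex.norm_real, abs_of_pos pi_pos, abs_of_pos ht]
  rw [habs_c]
  have step : (1 / (4 * π * t)) * ‖(∑' m : ℤ,
      besselI |(m : ℝ) + α| z * Complex.exp (Complex.I * (m : ℂ) * ((θ : ℂ) - (θ' : ℂ))))‖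
      ≤ (1 / (4 * π * t)) * ((B * (4 * q ^ |α|)) * S) := by
    apply mul_le_mul_of_nonneg_left hsum_bound
    positivity
  refine step.trans ?_
  have hfinal : (1 / (4 * π * t)) * ((B * (4 * q ^ |α|)) * S)
      = (B * S * 4 / (4 * π)) * t⁻¹ * q ^ |α| := by
    field_simp
  rw [hfinal]
  apply mul_le_mul_of_nonneg_left _ (by positivity)
  rw [hq_eq]
  apply Real.rpow_le_rpow (by positivity) _ (abs_nonneg α)
  rw [div_le_div_iff₀ (by positivity) (by positivity)]
  nlinarith [mul_pos hr hr']
end
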